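/- There exists a universal constant C > 0 with the following property (Hardy-type inequality on hyperboloids). Let φ : ℝ × ℝ³ → ℂ be a smooth function that is spatially supported inside the forward light cone, i.e. φ(t,x) = 0 whenever |x| ≥ t − 1. Then for every τ ≥ 2, ‖ |x|^{-1} φ ‖_{L²(Σ_τ)} ≤ C · Σ_{i=1}^{3} ‖ t^{-1} L_i φ ‖_{L²(Σ_τ)}, i.e. ( ∫_{ℝ³} |x|^{-2} |φ(√(τ²+|x|²),x)|² dx )^{1/2} ≤ C Σ_{i=1}^{3} ( ∫_{ℝ³} (τ²+|x|²)^{-1} |(L_i φ)(√(τ²+|x|²),x)|² dx )^{1/2}. -/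

import Mathlib

open scoped BigOperators
open MeasureTheory

noncomputable section

abbrev Spc : Type := EuclideanSpace ℝ (Fin 3)

def dtD (φ : ℝ × Spc → ℂ) (p : ℝ × Spc) : ℂ := fderiv ℝ φ p (1, 0)

def dxD (i : Fin 3) (φ : ℝ × Spc → ℂ) (p : ℝ × Spc) : ℂ :=
  fderiv ℝ φ p (0, EuclideanSpace.single i 1)

/-- Lorentz boost `L_i φ = t ∂_{x^i} φ + x^i ∂_t φ`. -/
def Lb (i : Fin 3) (φ : ℝ × Spc → ℂ) (p : ℝ × Spc) : ℂ :=
  (p.1 : ℂ) * dxD i φ p + (p.2 i : ℂ) * dtD φ p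

open Set Metric
open scoped ENNReal
set_option maxHeartbeats 1000000

section HardyAux

lemma ibp_aux (f f' B : ℝ → ℝ) {R : ℝ} (hR : 0 < R)
    (hfc : Continuous f) (hf'c : Continuous f') (hBc : Continuous B)
    (hdf : ∀ r, HasDerivAt f (f' r) r) (hfR : f R = 0)
    (hpt : ∀ r ∈ Icc (0:ℝ) R, -(r * f' r) ≤ 1/2 * f r + 2 * B r) :
    ∫ r in (0:ℝ)..R, f r ≤ 4 * ∫ r in (0:ℝ)..R, B r := by
  have hF : ∀ r ∈ uIcc (0:ℝ) R, HasDerivAt (fun s => s * f s) (f r + r * f' r) r := by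
    intro r _
    have := (hasDerivAt_id r).mul (hdf r)
    exact this.congr_deriv (by simp)
  have hFTC : ∫ r in (0:ℝ)..R, (f r + r * f' r) = R * f R - 0 * f 0 :=
    intervalIntegral.integral_eq_sub_of_hasDerivAt hF
      ((hfc.add (continuous_id'.mul hf'c)).intervalIntegrable 0 R)
  have key : ∫ r in (0:ℝ)..R, f r = - ∫ r in (0:ℝ)..R, r * f' r := by
    rw [intervalIntegral.integral_add (f := f) (g := fun r => r * f' r) (hfc.intervalIntegrable 0 R)
        ((continuous_id'.mul hf'c).intervalIntegrable 0 R), hfR] at hFTC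
    linarith
  have hmono : ∫ r in (0:ℝ)..R, -(r * f' r) ≤ ∫ r in (0:ℝ)..R, (1/2 * f r + 2 * B r) :=
    intervalIntegral.integral_mono_on hR.le
      (((continuous_id'.mul hf'c).neg).intervalIntegrable 0 R)
      (((continuous_const.mul hfc).add (continuous_const.mul hBc)).intervalIntegrable 0 R) hpt
  rw [intervalIntegral.integral_neg] at hmono
  rw [intervalIntegral.integral_add (f := fun r => 1/2 * f r) (g := fun r => 2 * B r) ((continuous_const.mul hfc).intervalIntegrable 0 R)
      ((continuous_const.mul hBc).intervalIntegrable 0 R),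
    intervalIntegral.integral_const_mul, intervalIntegral.integral_const_mul] at hmono
  linarith

lemma split_int (g : ℝ → ℝ) (hgc : Continuous g) {R : ℝ} (hR : 0 < R)
    (hg0 : ∀ r, R < r → g r = 0) :
    ∫ r in Ioi (0:ℝ), g r = ∫ r in (0:ℝ)..R, g r := by
  rw [intervalIntegral.integral_of_le hR.le]
  rw [← Ioc_union_Ioi_eq_Ioi hR.le, setIntegral_union (by simp [disjoint_left]) measurableSet_Ioi
      (hgc.integrableOn_Ioc) ?_]
  · rw [setIntegral_congr_fun measurableSet_Ioi (fun r hr => hg0 r hr), integral_zero, add_zero]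
  · exact IntegrableOn.congr_fun (integrableOn_zero) (fun r hr => (hg0 r hr).symm) measurableSet_Ioi

lemma hardy1d (w : ℝ → ℂ) (hw : ContDiff ℝ 1 w) {R : ℝ} (hR : 0 < R)
    (h0 : ∀ r, R ≤ r → w r = 0) :
    ∫ r in Ioi (0:ℝ), ‖w r‖ ^ 2 ≤ 4 * ∫ r in Ioi (0:ℝ), r ^ 2 * ‖deriv w r‖ ^ 2 := by
  have hwc : Continuous w := hw.continuous
  have hw' : Continuous (deriv w) := hw.continuous_deriv le_rfl
  have hdw : ∀ r, HasDerivAt w (deriv w r) r :=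
    fun r => (hw.differentiable one_ne_zero r).hasDerivAt
  have hderiv0 : ∀ r, R < r → deriv w r = 0 := by
    intro r h
    have : w =ᶠ[nhds r] (fun _ => 0) := by
      filter_upwards [Ioi_mem_nhds h] with s hs using h0 s (le_of_lt hs)
    rw [Filter.EventuallyEq.deriv_eq this, deriv_const]
  rw [split_int _ (by continuity) hR (fun r hr => by simp [h0 r hr.le]),
      split_int _ (by continuity) hR (fun r hr => by simp [hderiv0 r hr])]
  apply ibp_aux _ (fun r => 2 * (inner ℝ (w r) (deriv w r) : ℝ)) _ hR (by continuity)
      (continuous_const.mul (hwc.inner hw')) (by continuity)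
      (fun r => (hdw r).norm_sq) (by simp [h0 R le_rfl])
  intro r hr
  have h1 : |(inner ℝ (w r) (deriv w r) : ℝ)| ≤ ‖w r‖ * ‖deriv w r‖ := abs_real_inner_le_norm _ _
  have h2 : -(r * (2 * (inner ℝ (w r) (deriv w r) : ℝ))) ≤ 2 * (r * (‖w r‖ * ‖deriv w r‖)) := by
    have habs : -(r * (2 * (inner ℝ (w r) (deriv w r) : ℝ))) ≤ |r * (2 * (inner ℝ (w r) (deriv w r) : ℝ))| := neg_le_abs _
    refine habs.trans ?_
    rw [abs_mul, abs_of_nonneg hr.1, abs_mul, abs_of_nonneg (by norm_num : (0:ℝ) ≤ 2)]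
    nlinarith [abs_nonneg (inner ℝ (w r) (deriv w r) : ℝ), hr.1]
  refine h2.trans ?_
  nlinarith [norm_nonneg (w r), norm_nonneg (deriv w r), hr.1,
    sq_nonneg (‖w r‖/2 - r * ‖deriv w r‖), sq_nonneg (‖w r‖ - 2 * (r * ‖deriv w r‖))]

lemma dim_spc : Module.finrank ℝ Spc - 1 = 2 := by
  simp [finrank_euclideanSpace_fin]

lemma polar_transfer (g : Spc → ℝ) (hg : Measurable g) :
    ∫⁻ x, ENNReal.ofReal (g x) =
      ∫⁻ ω : sphere (0:Spc) 1, ∫⁻ r : Ioi (0:ℝ),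
        ENNReal.ofReal (g ((r : ℝ) • (ω : Spc))) ∂(Measure.volumeIoiPow 2)
        ∂((volume : Measure Spc).toSphere) := by
  have hF : Measurable fun p : sphere (0:Spc) 1 × Ioi (0:ℝ) =>
      ENNReal.ofReal (g ((p.2 : ℝ) • (p.1 : Spc))) := by
    apply Measurable.ennreal_ofReal
    exact hg.comp ((continuous_subtype_val.comp continuous_snd).smul
      (continuous_subtype_val.comp continuous_fst)).measurable
  have h1 : ∫⁻ x, ENNReal.ofReal (g x)
      = ∫⁻ x : ({0}ᶜ : Set Spc), ENNReal.ofReal (g x.1) ∂(volume.comap Subtype.val) := by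
    rw [lintegral_subtype_comap (measurableSet_singleton (0:Spc)).compl
        (fun x => ENNReal.ofReal (g x)),
      MeasureTheory.restrict_compl_singleton]
  have h2 := (Measure.measurePreserving_homeomorphUnitSphereProd
      (volume : Measure Spc)).lintegral_comp hF
  rw [h1, ← lintegral_prod _ hF.aemeasurable]
  rw [dim_spc] at h2
  rw [← h2]
  apply lintegral_congr
  intro x
  have hx : x.1 ≠ 0 := x.2
  simp only [homeomorphUnitSphereProd_apply_snd_coe, homeomorphUnitSphereProd_apply_fst_coe]
  rw [smul_smul, mul_inv_cancel₀ (norm_ne_zero_iff.2 hx), one_smul]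

lemma int_ray (h : ℝ → ℝ) (hc : Continuous h) {R : ℝ} (hR : 0 < R)
    (h0 : ∀ r, R < r → h r = 0) : IntegrableOn h (Ioi (0:ℝ)) := by
  rw [← Ioc_union_Ioi_eq_Ioi hR.le]
  exact (hc.integrableOn_Ioc).union
    ((integrableOn_zero).congr_fun (fun r hr => (h0 r hr).symm) measurableSet_Ioi)

lemma vIP2_lintegral (g : Spc → ℝ) (hg : Measurable g) (hnn : ∀ x, 0 ≤ g x) (ω : Spc)
    (hint : IntegrableOn (fun r => r ^ 2 * g (r • ω)) (Ioi (0:ℝ))) :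
    ∫⁻ r : Ioi (0:ℝ), ENNReal.ofReal (g ((r:ℝ) • ω)) ∂(Measure.volumeIoiPow 2)
      = ENNReal.ofReal (∫ r in Ioi (0:ℝ), r ^ 2 * g (r • ω)) := by
  have hmg : Measurable fun r : ℝ => ENNReal.ofReal (g (r • ω)) :=
    (hg.comp (continuous_id.smul continuous_const).measurable).ennreal_ofReal
  have hmg' : Measurable fun r : Ioi (0:ℝ) => ENNReal.ofReal (g ((r:ℝ) • ω)) :=
    hmg.comp measurable_subtype_coe
  rw [Measure.volumeIoiPow,
    lintegral_withDensity_eq_lintegral_mul _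
      ((measurable_subtype_coe.pow_const 2).ennreal_ofReal) hmg']
  simp only [Pi.mul_apply]
  rw [lintegral_subtype_comap measurableSet_Ioi
      (fun r : ℝ => ENNReal.ofReal (r ^ 2) * ENNReal.ofReal (g (r • ω)))]
  rw [show (∫⁻ x in Ioi (0:ℝ), ENNReal.ofReal (x ^ 2) * ENNReal.ofReal (g (x • ω)))
        = ∫⁻ x in Ioi (0:ℝ), ENNReal.ofReal (x ^ 2 * g (x • ω)) from
      lintegral_congr fun r => (ENNReal.ofReal_mul (sq_nonneg r)).symm,
    ← ofReal_integral_eq_lintegral_ofReal hint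
      (ae_of_all _ (fun r => mul_nonneg (sq_nonneg r) (hnn _)))]

lemma dir_bound (L : Spc →L[ℝ] ℂ) (v : Spc) (hv : ‖v‖ = 1) :
    ‖L v‖ ^ 2 ≤ ∑ i, ‖L (EuclideanSpace.single i (1:ℝ))‖ ^ 2 := by
  have hv2 : ∑ i, (v i) ^ 2 = 1 := by
    have h := EuclideanSpace.norm_eq v
    rw [hv] at h
    have := Real.sqrt_eq_one.mp h.symm
    simpa [sq_abs] using this
  have hdec : v = ∑ i, v i • EuclideanSpace.single i (1:ℝ) := by
    ext j
    rw [WithLp.ofLp_sum, Finset.sum_apply]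
    simp [EuclideanSpace.single_apply]
  have hL : L v = ∑ i, v i • L (EuclideanSpace.single i (1:ℝ)) := by
    conv_lhs => rw [hdec]
    simp [map_sum, _root_.map_smul]
  have h1 : ‖L v‖ ≤ ∑ i, |v i| * ‖L (EuclideanSpace.single i (1:ℝ))‖ := by
    rw [hL]
    refine (norm_sum_le _ _).trans ?_
    apply Finset.sum_le_sum
    intro i _
    rw [norm_smul, Real.norm_eq_abs]
  have h2 : (∑ i, |v i| * ‖L (EuclideanSpace.single i (1:ℝ))‖) ^ 2
      ≤ (∑ i, |v i| ^ 2) * ∑ i, ‖L (EuclideanSpace.single i (1:ℝ))‖ ^ 2 :=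
    Finset.sum_mul_sq_le_sq_mul_sq _ _ _
  have h3 : (∑ i, |v i| ^ 2) = 1 := by simpa [sq_abs] using hv2
  calc ‖L v‖ ^ 2 ≤ (∑ i, |v i| * ‖L (EuclideanSpace.single i (1:ℝ))‖) ^ 2 := by
        apply pow_le_pow_left₀ (norm_nonneg _) h1
    _ ≤ _ := by rw [h3] at h2; simpa using h2

variable {φ : ℝ × Spc → ℂ} {τ : ℝ}

lemma sqrt_pos_of (hτ : 2 ≤ τ) (x : Spc) : 0 < Real.sqrt (τ ^ 2 + ‖x‖ ^ 2) :=
  Real.sqrt_pos.2 (by nlinarith [sq_nonneg ‖x‖])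

lemma smooth_s (hτ : 2 ≤ τ) : ContDiff ℝ (⊤ : ℕ∞) (fun x : Spc => Real.sqrt (τ ^ 2 + ‖x‖ ^ 2)) := by
  rw [contDiff_iff_contDiffAt]
  intro x
  have hq : ContDiffAt ℝ (⊤ : ℕ∞) (fun x : Spc => τ ^ 2 + ‖x‖ ^ 2) x :=
    (contDiff_const.add (contDiff_norm_sq ℝ)).contDiffAt
  exact (Real.contDiffAt_sqrt (by nlinarith [sq_nonneg ‖x‖] : τ ^ 2 + ‖x‖ ^ 2 ≠ 0)).comp x hq

lemma smooth_u (hφ : ContDiff ℝ (⊤ : ℕ∞) φ) (hτ : 2 ≤ τ) :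
    ContDiff ℝ (⊤ : ℕ∞) (fun x : Spc => φ (Real.sqrt (τ ^ 2 + ‖x‖ ^ 2), x)) :=
  hφ.comp (ContDiff.prodMk (smooth_s hτ) contDiff_id)

lemma fderiv_u (hφ : ContDiff ℝ (⊤ : ℕ∞) φ) (hτ : 2 ≤ τ) (x : Spc) (i : Fin 3) :
    fderiv ℝ (fun x : Spc => φ (Real.sqrt (τ ^ 2 + ‖x‖ ^ 2), x)) x (EuclideanSpace.single i 1)
      = ((Real.sqrt (τ ^ 2 + ‖x‖ ^ 2) : ℂ))⁻¹
        * Lb i φ (Real.sqrt (τ ^ 2 + ‖x‖ ^ 2), x) := by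
  set t := Real.sqrt (τ ^ 2 + ‖x‖ ^ 2) with ht
  have htpos : 0 < t := sqrt_pos_of hτ x
  have hq : HasFDerivAt (fun x : Spc => τ ^ 2 + ‖x‖ ^ 2)
      (2 • (innerSL ℝ x)) x := ((hasStrictFDerivAt_norm_sq x).hasFDerivAt).const_add (τ ^ 2)
  have hqpos : (0:ℝ) < τ ^ 2 + ‖x‖ ^ 2 := by nlinarith [sq_nonneg ‖x‖]
  have hsq : HasDerivAt Real.sqrt (1 / (2 * t)) (τ ^ 2 + ‖x‖ ^ 2) :=
    Real.hasDerivAt_sqrt hqpos.ne'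
  have hs : HasFDerivAt (fun x : Spc => Real.sqrt (τ ^ 2 + ‖x‖ ^ 2))
      ((1 / (2 * t)) • (2 • (innerSL ℝ x))) x := hsq.comp_hasFDerivAt x hq
  have hψ : HasFDerivAt (fun x : Spc => (Real.sqrt (τ ^ 2 + ‖x‖ ^ 2), x))
      (((1 / (2 * t)) • (2 • (innerSL ℝ x))).prod (ContinuousLinearMap.id ℝ Spc)) x :=
    HasFDerivAt.prodMk hs (hasFDerivAt_id x)
  have hdφ : HasFDerivAt φ (fderiv ℝ φ (t, x)) (t, x) :=
    (hφ.differentiable (by simp) (t, x)).hasFDerivAt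
  have hu : HasFDerivAt (fun x : Spc => φ (Real.sqrt (τ ^ 2 + ‖x‖ ^ 2), x))
      ((fderiv ℝ φ (t, x)).comp
        ((((1 / (2 * t)) • (2 • (innerSL ℝ x))).prod (ContinuousLinearMap.id ℝ Spc)))) x := by
    exact HasFDerivAt.comp (𝕜 := ℝ) (f := fun x : Spc => (Real.sqrt (τ ^ 2 + ‖x‖ ^ 2), x))
      (g := φ) x hdφ hψ
  rw [hu.fderiv]
  have hinner : (innerSL ℝ x) (EuclideanSpace.single i (1:ℝ)) = x i := by
    simp [EuclideanSpace.inner_single_right, real_inner_comm]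
  have heval : ((((1 / (2 * t)) • (2 • (innerSL ℝ x))).prod (ContinuousLinearMap.id ℝ Spc)))
      (EuclideanSpace.single i (1:ℝ)) = (t⁻¹ * x i, EuclideanSpace.single i (1:ℝ)) := by
    simp [ContinuousLinearMap.prod_apply, hinner]
    ring
  rw [ContinuousLinearMap.comp_apply, heval]
  have hsplit : ((t⁻¹ * x i : ℝ), EuclideanSpace.single i (1:ℝ))
      = (t⁻¹ * x i) • ((1:ℝ), (0:Spc)) + ((0:ℝ), EuclideanSpace.single i (1:ℝ)) := by
    simp [Prod.ext_iff]
  rw [hsplit, map_add, _root_.map_smul]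
  show (t⁻¹ * x i) • dtD φ (t, x) + dxD i φ (t, x) = _
  rw [Lb]
  have htne : (t : ℂ) ≠ 0 := by exact_mod_cast htpos.ne'
  simp only [Complex.real_smul]
  push_cast
  field_simp
  ring

lemma hardy3 (u : Spc → ℂ) (hu : ContDiff ℝ (⊤ : ℕ∞) u) {R : ℝ} (hR : 0 < R)
    (h0 : ∀ x : Spc, R ≤ ‖x‖ → u x = 0) :
    (∫ x : Spc, ‖x‖⁻¹ ^ 2 * ‖u x‖ ^ 2) ≤
      4 * ∫ x : Spc, ∑ i, ‖fderiv ℝ u x (EuclideanSpace.single i (1:ℝ))‖ ^ 2 := by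
  have hu1 : ContDiff ℝ 1 u := hu.of_le (by exact_mod_cast le_top)
  have hDu : Continuous fun x => fderiv ℝ u x := hu1.continuous_fderiv one_ne_zero
  set g₁ : Spc → ℝ := fun x => ‖x‖⁻¹ ^ 2 * ‖u x‖ ^ 2 with hg₁
  set g₂ : Spc → ℝ := fun x => ∑ i, ‖fderiv ℝ u x (EuclideanSpace.single i (1:ℝ))‖ ^ 2 with hg₂
  have hg₂c : Continuous g₂ := by
    apply continuous_finset_sum
    intro i _
    exact (((ContinuousLinearMap.apply ℝ ℂ
      (EuclideanSpace.single i (1:ℝ))).continuous.comp hDu).norm).pow 2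
  have hg₁m : Measurable g₁ :=
    ((measurable_norm.inv).pow_const 2).mul ((hu.continuous.norm.measurable).pow_const 2)
  have hg₁nn : ∀ x, 0 ≤ g₁ x := fun x => mul_nonneg (sq_nonneg _) (sq_nonneg _)
  have hg₂nn : ∀ x, 0 ≤ g₂ x := fun x => Finset.sum_nonneg fun i _ => sq_nonneg _
  have hfz : ∀ x : Spc, R < ‖x‖ → fderiv ℝ u x = 0 := by
    intro x hx
    have hev : u =ᶠ[nhds x] (fun _ => 0) := by
      filter_upwards [(isOpen_lt continuous_const continuous_norm).mem_nhds hx] with y hy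
      exact h0 y (le_of_lt hy)
    rw [Filter.EventuallyEq.fderiv_eq hev, fderiv_fun_const]
    rfl
  have hg₂z : ∀ x : Spc, R < ‖x‖ → g₂ x = 0 := by
    intro x hx; simp [hg₂, hfz x hx]
  have hg₂int : Integrable g₂ := by
    apply hg₂c.integrable_of_hasCompactSupport
    apply HasCompactSupport.intro (isCompact_closedBall (0:Spc) R)
    intro x hx
    exact hg₂z x (by simpa [dist_zero_right] using hx)
  -- per-ray inequality
  have hray : ∀ ω : sphere (0:Spc) 1,
      ∫⁻ r : Ioi (0:ℝ), ENNReal.ofReal (g₁ ((r:ℝ) • (ω:Spc))) ∂(Measure.volumeIoiPow 2)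
        ≤ 4 * ∫⁻ r : Ioi (0:ℝ), ENNReal.ofReal (g₂ ((r:ℝ) • (ω:Spc)))
            ∂(Measure.volumeIoiPow 2) := by
    intro ω
    have hω : ‖(ω : Spc)‖ = 1 := norm_eq_of_mem_sphere ω
    set w : ℝ → ℂ := fun r => u (r • (ω:Spc)) with hwdef
    have hw : ContDiff ℝ 1 w := hu1.comp (contDiff_id.smul contDiff_const)
    have hnrm : ∀ r : ℝ, 0 ≤ r → ‖r • (ω:Spc)‖ = r := by
      intro r hr; rw [norm_smul, hω, mul_one, Real.norm_eq_abs, abs_of_nonneg hr]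
    have hw0 : ∀ r, R ≤ r → w r = 0 := by
      intro r hr
      exact h0 _ (by rw [hnrm r (hR.le.trans hr)]; exact hr)
    have hder : ∀ r : ℝ, deriv w r = fderiv ℝ u (r • (ω:Spc)) (ω:Spc) := by
      intro r
      have h := ((hu1.differentiable one_ne_zero _).hasFDerivAt).comp_hasDerivAt r
        ((hasDerivAt_id r).smul_const (ω:Spc))
      rw [one_smul] at h
      exact h.deriv
    have hderc : Continuous (deriv w) := hw.continuous_deriv le_rfl
    -- integrability facts on the ray
    have hint₂ : IntegrableOn (fun r => r ^ 2 * g₂ (r • (ω:Spc))) (Ioi (0:ℝ)) := by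
      apply int_ray (fun r => r ^ 2 * g₂ (r • (ω:Spc)))
        ((continuous_pow 2).mul (hg₂c.comp (continuous_id'.smul continuous_const))) hR
      intro r hr
      rw [hg₂z _ (by rw [hnrm r (hR.le.trans hr.le)]; exact hr), mul_zero]
    have hwint : IntegrableOn (fun r => ‖w r‖ ^ 2) (Ioi (0:ℝ)) :=
      int_ray _ (hw.continuous.norm.pow 2) hR fun r hr => by simp [hw0 r hr.le]
    have hint₁ : IntegrableOn (fun r => r ^ 2 * g₁ (r • (ω:Spc))) (Ioi (0:ℝ)) := by
      apply hwint.congr_fun _ measurableSet_Ioi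
      intro r hr
      have hrpos : (0:ℝ) < r := hr
      rw [hg₁]
      simp only
      rw [hnrm r hrpos.le]
      field_simp
      rfl
    have hBint : IntegrableOn (fun r => r ^ 2 * ‖deriv w r‖ ^ 2) (Ioi (0:ℝ)) := by
      apply int_ray (fun r => r ^ 2 * ‖deriv w r‖ ^ 2) ((continuous_pow 2).mul (hderc.norm.pow 2)) hR
      intro r hr
      rw [hder r, hfz _ (by rw [hnrm r (hR.le.trans hr.le)]; exact hr)]
      simp
    rw [vIP2_lintegral g₁ hg₁m hg₁nn _ hint₁, vIP2_lintegral g₂ (hg₂c.measurable) hg₂nn _ hint₂]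
    have h4 : (4:ℝ≥0∞) * ENNReal.ofReal (∫ r in Ioi (0:ℝ), r ^ 2 * g₂ (r • (ω:Spc)))
        = ENNReal.ofReal (4 * ∫ r in Ioi (0:ℝ), r ^ 2 * g₂ (r • (ω:Spc))) := by
      rw [ENNReal.ofReal_mul (by norm_num : (0:ℝ) ≤ 4)]
      norm_num
    rw [h4]
    apply ENNReal.ofReal_le_ofReal
    have e₁ : ∫ r in Ioi (0:ℝ), r ^ 2 * g₁ (r • (ω:Spc)) = ∫ r in Ioi (0:ℝ), ‖w r‖ ^ 2 := by
      apply setIntegral_congr_fun measurableSet_Ioi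
      intro r hr
      have hrpos : (0:ℝ) < r := hr
      rw [hg₁]
      simp only
      rw [hnrm r hrpos.le]
      field_simp
      rfl
    rw [e₁]
    refine (hardy1d w hw hR hw0).trans ?_
    have : ∫ r in Ioi (0:ℝ), r ^ 2 * ‖deriv w r‖ ^ 2
        ≤ ∫ r in Ioi (0:ℝ), r ^ 2 * g₂ (r • (ω:Spc)) := by
      apply setIntegral_mono_on hBint hint₂ measurableSet_Ioi
      intro r hr
      apply mul_le_mul_of_nonneg_left _ (sq_nonneg r)
      rw [hder r]
      exact dir_bound _ _ hω
    linarith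
  -- assemble
  have hG₂m : Measurable fun p : sphere (0:Spc) 1 × Ioi (0:ℝ) =>
      ENNReal.ofReal (g₂ ((p.2 : ℝ) • (p.1 : Spc))) :=
    (hg₂c.measurable.comp ((continuous_subtype_val.comp continuous_snd).smul
      (continuous_subtype_val.comp continuous_fst)).measurable).ennreal_ofReal
  have key : ∫⁻ x, ENNReal.ofReal (g₁ x) ≤ 4 * ∫⁻ x, ENNReal.ofReal (g₂ x) := by
    have houter : Measurable fun ω : sphere (0:Spc) 1 =>
        ∫⁻ r : Ioi (0:ℝ), ENNReal.ofReal (g₂ ((r:ℝ) • (ω:Spc))) ∂(Measure.volumeIoiPow 2) :=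
      Measurable.lintegral_prod_right' hG₂m
    calc ∫⁻ x, ENNReal.ofReal (g₁ x)
        = ∫⁻ ω : sphere (0:Spc) 1, ∫⁻ r : Ioi (0:ℝ),
            ENNReal.ofReal (g₁ ((r:ℝ) • (ω:Spc))) ∂(Measure.volumeIoiPow 2)
            ∂((volume : Measure Spc).toSphere) := polar_transfer g₁ hg₁m
      _ ≤ ∫⁻ ω : sphere (0:Spc) 1, 4 * ∫⁻ r : Ioi (0:ℝ),
            ENNReal.ofReal (g₂ ((r:ℝ) • (ω:Spc))) ∂(Measure.volumeIoiPow 2)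
            ∂((volume : Measure Spc).toSphere) := lintegral_mono hray
      _ = 4 * ∫⁻ ω : sphere (0:Spc) 1, ∫⁻ r : Ioi (0:ℝ),
            ENNReal.ofReal (g₂ ((r:ℝ) • (ω:Spc))) ∂(Measure.volumeIoiPow 2)
            ∂((volume : Measure Spc).toSphere) := lintegral_const_mul 4 houter
      _ = 4 * ∫⁻ x, ENNReal.ofReal (g₂ x) := by
          rw [← polar_transfer g₂ hg₂c.measurable]
  have hI₂ : ∫⁻ x, ENNReal.ofReal (g₂ x) = ENNReal.ofReal (∫ x, g₂ x) :=
    (ofReal_integral_eq_lintegral_ofReal hg₂int (ae_of_all _ hg₂nn)).symm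
  have hg₁int : Integrable g₁ := by
    refine ⟨hg₁m.aestronglyMeasurable, ?_⟩
    rw [hasFiniteIntegral_iff_ofReal (ae_of_all _ hg₁nn)]
    calc ∫⁻ x, ENNReal.ofReal (g₁ x) ≤ 4 * ∫⁻ x, ENNReal.ofReal (g₂ x) := key
      _ < ⊤ := by rw [hI₂]; exact ENNReal.mul_lt_top (by norm_num) ENNReal.ofReal_lt_top
  have e₂ : ∫ x, g₁ x = (∫⁻ x, ENNReal.ofReal (g₁ x)).toReal := by
    rw [integral_eq_lintegral_of_nonneg_ae (ae_of_all _ hg₁nn) hg₁m.aestronglyMeasurable]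
  rw [e₂]
  have : (∫⁻ x, ENNReal.ofReal (g₁ x)).toReal ≤ (4 * ∫⁻ x, ENNReal.ofReal (g₂ x)).toReal := by
    apply ENNReal.toReal_mono
    · rw [hI₂]; exact (ENNReal.mul_lt_top (by norm_num) ENNReal.ofReal_lt_top).ne
    · exact key
  refine this.trans_eq ?_
  rw [hI₂, ENNReal.toReal_mul, ENNReal.toReal_ofReal (integral_nonneg hg₂nn)]
  norm_num

lemma sqrt3 (a b c : ℝ) (ha : 0 ≤ a) (hb : 0 ≤ b) (hc : 0 ≤ c) :
    (a + b + c) ^ ((1:ℝ)/2) ≤ a ^ ((1:ℝ)/2) + b ^ ((1:ℝ)/2) + c ^ ((1:ℝ)/2) := by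
  rw [← Real.sqrt_eq_rpow, ← Real.sqrt_eq_rpow, ← Real.sqrt_eq_rpow, ← Real.sqrt_eq_rpow]
  have e0 := Real.sq_sqrt ha
  have e1 := Real.sq_sqrt hb
  have e2 := Real.sq_sqrt hc
  have n0 := Real.sqrt_nonneg a
  have n1 := Real.sqrt_nonneg b
  have n2 := Real.sqrt_nonneg c
  have hle : a + b + c ≤ (Real.sqrt a + Real.sqrt b + Real.sqrt c) ^ 2 := by nlinarith
  calc Real.sqrt (a + b + c)
      ≤ Real.sqrt ((Real.sqrt a + Real.sqrt b + Real.sqrt c) ^ 2) := Real.sqrt_le_sqrt hle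
    _ = _ := Real.sqrt_sq (by positivity)

end HardyAux

/-- Hardy-type inequality on hyperboloids. -/
theorem stmt1 :
    ∃ C > (0 : ℝ), ∀ φ : ℝ × Spc → ℂ, ContDiff ℝ (⊤ : ℕ∞) φ →
      (∀ (t : ℝ) (x : Spc), t - 1 ≤ ‖x‖ → φ (t, x) = 0) →
      ∀ τ : ℝ, 2 ≤ τ →
        (∫ x : Spc, ‖x‖⁻¹ ^ 2 * ‖φ (Real.sqrt (τ ^ 2 + ‖x‖ ^ 2), x)‖ ^ 2) ^ ((1 : ℝ) / 2) ≤
          C * ∑ i : Fin 3,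
            (∫ x : Spc, (τ ^ 2 + ‖x‖ ^ 2)⁻¹ *
              ‖Lb i φ (Real.sqrt (τ ^ 2 + ‖x‖ ^ 2), x)‖ ^ 2) ^ ((1 : ℝ) / 2) := by
  refine ⟨2, by norm_num, ?_⟩
  intro φ hφ hsupp τ hτ
  set u : Spc → ℂ := fun x => φ (Real.sqrt (τ ^ 2 + ‖x‖ ^ 2), x) with hudef
  have hu : ContDiff ℝ (⊤ : ℕ∞) u := smooth_u hφ hτ
  set R : ℝ := (τ ^ 2 - 1) / 2 with hRdef
  have hR : 0 < R := by rw [hRdef]; nlinarith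
  have h0 : ∀ x : Spc, R ≤ ‖x‖ → u x = 0 := by
    intro x hx
    apply hsupp
    have h1 : Real.sqrt (τ ^ 2 + ‖x‖ ^ 2) ≤ ‖x‖ + 1 := by
      rw [show ‖x‖ + 1 = Real.sqrt ((‖x‖ + 1) ^ 2) from
        (Real.sqrt_sq (by positivity)).symm]
      apply Real.sqrt_le_sqrt
      nlinarith [hx, norm_nonneg x]
    linarith
  -- Hardy inequality for u
  have hmain := hardy3 u hu hR h0
  -- rewrite the derivative sum
  have hfi : ∀ i : Fin 3, ∀ x : Spc,
      ‖fderiv ℝ u x (EuclideanSpace.single i (1:ℝ))‖ ^ 2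
        = (τ ^ 2 + ‖x‖ ^ 2)⁻¹ * ‖Lb i φ (Real.sqrt (τ ^ 2 + ‖x‖ ^ 2), x)‖ ^ 2 := by
    intro i x
    rw [hudef]
    rw [fderiv_u hφ hτ x i]
    rw [norm_mul, mul_pow]
    have hq : (0:ℝ) < τ ^ 2 + ‖x‖ ^ 2 := by nlinarith [sq_nonneg ‖x‖]
    have ht : (0:ℝ) < Real.sqrt (τ ^ 2 + ‖x‖ ^ 2) := sqrt_pos_of hτ x
    congr 1
    rw [norm_inv, Complex.norm_real, Real.norm_eq_abs, abs_of_pos ht, inv_pow,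
      Real.sq_sqrt hq.le]
  -- integrability of each derivative term
  have hu1 : ContDiff ℝ 1 u := hu.of_le (by exact_mod_cast le_top)
  have hDu : Continuous fun x => fderiv ℝ u x := hu1.continuous_fderiv one_ne_zero
  have hfz : ∀ x : Spc, R < ‖x‖ → fderiv ℝ u x = 0 := by
    intro x hx
    have hev : u =ᶠ[nhds x] (fun _ => 0) := by
      filter_upwards [(isOpen_lt continuous_const continuous_norm).mem_nhds hx] with y hy
      exact h0 y (le_of_lt hy)
    rw [Filter.EventuallyEq.fderiv_eq hev, fderiv_fun_const]
    rfl
  have hint : ∀ i : Fin 3,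
      Integrable (fun x : Spc => ‖fderiv ℝ u x (EuclideanSpace.single i (1:ℝ))‖ ^ 2) := by
    intro i
    apply Continuous.integrable_of_hasCompactSupport
    · exact (((ContinuousLinearMap.apply ℝ ℂ
        (EuclideanSpace.single i (1:ℝ))).continuous.comp hDu).norm).pow 2
    · apply HasCompactSupport.intro (isCompact_closedBall (0:Spc) R)
      intro x hx
      rw [hfz x (by simpa [dist_zero_right] using hx)]
      simp
  have hsum : ∫ x : Spc, ∑ i, ‖fderiv ℝ u x (EuclideanSpace.single i (1:ℝ))‖ ^ 2
      = ∑ i : Fin 3, ∫ x : Spc, ‖fderiv ℝ u x (EuclideanSpace.single i (1:ℝ))‖ ^ 2 :=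
    integral_finset_sum _ fun i _ => hint i
  set J : Fin 3 → ℝ := fun i => ∫ x : Spc,
      (τ ^ 2 + ‖x‖ ^ 2)⁻¹ * ‖Lb i φ (Real.sqrt (τ ^ 2 + ‖x‖ ^ 2), x)‖ ^ 2 with hJdef
  have hJeq : ∀ i : Fin 3,
      (∫ x : Spc, ‖fderiv ℝ u x (EuclideanSpace.single i (1:ℝ))‖ ^ 2) = J i := by
    intro i
    exact integral_congr_ae (Filter.Eventually.of_forall fun x => hfi i x)
  have hJnn : ∀ i, 0 ≤ J i := by
    intro i
    rw [hJdef]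
    exact integral_nonneg fun x => mul_nonneg (by positivity) (sq_nonneg _)
  have hI : (∫ x : Spc, ‖x‖⁻¹ ^ 2 * ‖u x‖ ^ 2) ≤ 4 * ∑ i : Fin 3, J i := by
    refine hmain.trans ?_
    rw [hsum]
    apply mul_le_mul_of_nonneg_left _ (by norm_num : (0:ℝ) ≤ 4)
    apply le_of_eq
    exact Finset.sum_congr rfl fun i _ => hJeq i
  have hInn : 0 ≤ ∫ x : Spc, ‖x‖⁻¹ ^ 2 * ‖u x‖ ^ 2 :=
    integral_nonneg fun x => mul_nonneg (sq_nonneg _) (sq_nonneg _)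
  have hSnn : (0:ℝ) ≤ ∑ i : Fin 3, J i := Finset.sum_nonneg fun i _ => hJnn i
  -- take square roots
  have step1 : (∫ x : Spc, ‖x‖⁻¹ ^ 2 * ‖u x‖ ^ 2) ^ ((1:ℝ)/2)
      ≤ (4 * ∑ i : Fin 3, J i) ^ ((1:ℝ)/2) :=
    Real.rpow_le_rpow hInn hI (by norm_num)
  have step2 : ((4:ℝ) * ∑ i : Fin 3, J i) ^ ((1:ℝ)/2)
      = 2 * (∑ i : Fin 3, J i) ^ ((1:ℝ)/2) := by
    rw [Real.mul_rpow (by norm_num) hSnn]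
    norm_num
  have step3 : (∑ i : Fin 3, J i) ^ ((1:ℝ)/2) ≤ ∑ i : Fin 3, (J i) ^ ((1:ℝ)/2) := by
    rw [Fin.sum_univ_three, Fin.sum_univ_three]
    exact sqrt3 _ _ _ (hJnn 0) (hJnn 1) (hJnn 2)
  calc (∫ x : Spc, ‖x‖⁻¹ ^ 2 * ‖φ (Real.sqrt (τ ^ 2 + ‖x‖ ^ 2), x)‖ ^ 2) ^ ((1:ℝ)/2)
      = (∫ x : Spc, ‖x‖⁻¹ ^ 2 * ‖u x‖ ^ 2) ^ ((1:ℝ)/2) := rfl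
    _ ≤ (4 * ∑ i : Fin 3, J i) ^ ((1:ℝ)/2) := step1
    _ = 2 * (∑ i : Fin 3, J i) ^ ((1:ℝ)/2) := step2
    _ ≤ 2 * ∑ i : Fin 3, (J i) ^ ((1:ℝ)/2) := by linarith [step3]
    _ = 2 * ∑ i : Fin 3, (∫ x : Spc, (τ ^ 2 + ‖x‖ ^ 2)⁻¹ *
          ‖Lb i φ (Real.sqrt (τ ^ 2 + ‖x‖ ^ 2), x)‖ ^ 2) ^ ((1:ℝ)/2) := rfl

end
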